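/- Let K be a number field. The map A_{K,f} → 2^{P_K}, a ↦ Z(a) = {p : a_p = 0}, descends to a bijection from the quasi-orbit space Q(A_{K,f}/K^*) onto the power set 2^{P_K}, which is a homeomorphism when 2^{P_K} carries the power-cofinite topology and the quasi-orbit space carries the quotient topology. -/

import Mathlib

open IsDedekindDomain HeightOneSpectrum

section Aux
variable {R : Type*} [CommRing R] [IsDedekindDomain R] {F : Type*} [Field F] [Algebra R F]
  [IsFractionRing R F]

theorem QOaux.exists_nat_lt' (γ : WithZero (Multiplicative ℤ)) (hγ : γ ≠ 0) :
    ∃ n : ℕ, ((Multiplicative.ofAdd (-(n:ℤ)) : Multiplicative ℤ) : WithZero (Multiplicative ℤ)) < γ := by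
  obtain ⟨u, rfl⟩ := WithZero.ne_zero_iff_exists.mp hγ
  refine ⟨(Multiplicative.toAdd u).natAbs + 1, ?_⟩
  rw [WithZero.coe_lt_coe, ← Multiplicative.toAdd_lt, toAdd_ofAdd]
  have := neg_abs_le (Multiplicative.toAdd u)
  push_cast
  omega

theorem QOaux.mul_lt_mul_right'' {a b c : WithZero (Multiplicative ℤ)} (h : a < b) (hc : c ≠ 0) :
    a * c < b * c := by
  rw [mul_comm a c, mul_comm b c]
  exact mul_lt_mul_of_pos_left h (zero_lt_iff.mpr hc)

theorem QOaux.ball_mem_nhds {L : Type*} [Field L] [Valued L (WithZero (Multiplicative ℤ))]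
    (x y0 : L) (hy0 : y0 ≠ 0) :
    {z : L | Valued.v (z - x) < Valued.v y0} ∈ nhds x := by
  rw [Valued.mem_nhds]
  refine ⟨Units.mk0 (Valued.v.restrict y0) ((Valuation.ne_zero_iff _).mpr hy0), fun z hz => ?_⟩
  exact (Valuation.restrict_lt_iff _).mp hz

theorem QOaux.valued_algebraMap (v : HeightOneSpectrum R) (x : F) :
    Valued.v (algebraMap F (v.adicCompletion F) x) = v.valuation F x := by
  exact valuedAdicCompletion_eq_valuation' v x

theorem QOaux.denseRange_algebraMap (v : HeightOneSpectrum R) :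
    DenseRange (algebraMap F (v.adicCompletion F)) := by
  exact HeightOneSpectrum.denseRange_algebraMap (K := F) v

theorem QOaux.finite_support {d : R} (hd : d ≠ 0) :
    {v : HeightOneSpectrum R | v.intValuationDef d ≠ 1}.Finite := by
  have hspan : Ideal.span {d} ≠ (0 : Ideal R) := by
    rw [Ne, Ideal.zero_eq_bot, Ideal.span_singleton_eq_bot]; exact hd
  refine (Ideal.finite_factors hspan).subset ?_
  intro v hv
  exact (v.intValuation_lt_one_iff_dvd d).mp (lt_of_le_of_ne (v.intValuation_le_one d) hv)

set_option synthInstance.maxHeartbeats 1000000 in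
theorem QOaux.t2 (v : HeightOneSpectrum R) : T2Space (v.adicCompletion F) := inferInstance
end Aux
open IsDedekindDomain HeightOneSpectrum

section Aux2
variable {R : Type*} [CommRing R] [IsDedekindDomain R] {F : Type*} [Field F] [Algebra R F]
  [IsFractionRing R F]

theorem QOaux.continuous_eval (v : HeightOneSpectrum R) :
    Continuous (fun x : FiniteAdeleRing R F => x v) := by
  exact RestrictedProduct.continuous_eval v

theorem QOaux.hasBasis_nhds_zero :
    (nhds (0 : FiniteAdeleRing R F)).HasBasis (fun _ : nonZeroDivisors R => True)
      (fun r => {c : FiniteAdeleRing R F | ∀ v, Valued.v (c v) ≤ v.intValuation (r : R)}) := by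
  classical
  have hopen : ∀ v : HeightOneSpectrum R,
      IsOpen ((v.adicCompletionIntegers F : ValuationSubring (v.adicCompletion F)) :
        Set (v.adicCompletion F)) :=
    fun v => Valued.isOpen_valuationSubring _
  have hn : nhds (0 : FiniteAdeleRing R F) = Filter.map
      (RestrictedProduct.structureMap (fun v : HeightOneSpectrum R => v.adicCompletion F)
        (fun v => ((v.adicCompletionIntegers F : ValuationSubring (v.adicCompletion F)) :
          Set (v.adicCompletion F))) Filter.cofinite) (nhds 0) :=
    RestrictedProduct.nhds_zero_eq_map_structureMap _ hopen
  rw [hn]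
  refine ⟨fun U => ?_⟩
  refine Filter.mem_map.trans ?_
  rw [nhds_pi, Filter.mem_pi]
  constructor
  · rintro ⟨I, hI, t, ht, hsub⟩
    have hball : ∀ v : HeightOneSpectrum R, ∃ n : ℕ, ∀ y : v.adicCompletionIntegers F,
        Valued.v (y : v.adicCompletion F) ≤ WithZero.exp (-(n:ℤ)) → y ∈ t v := by
      intro v
      obtain ⟨u, hu, hus⟩ := (mem_nhds_subtype _ _ _).mp (ht v)
      obtain ⟨γ, hγ⟩ := Valued.mem_nhds_zero.mp hu
      have hγ0 : (MonoidWithZeroHom.ValueGroup₀.embedding γ.1 : WithZero (Multiplicative ℤ)) ≠ 0 := by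
        have := MonoidWithZeroHom.ValueGroup₀.embedding_strictMono (zero_lt_iff.mpr γ.ne_zero)
        rw [map_zero] at this
        exact this.ne'
      obtain ⟨n, hn⟩ := QOaux.exists_nat_lt' _ hγ0
      exact ⟨n, fun y hy => hus (hγ ((Valuation.restrict_lt_iff_lt_embedding _).mpr
        (lt_of_le_of_lt hy hn)))⟩
    choose n hn using hball
    have hJ : (∏ v ∈ hI.toFinset, v.asIdeal ^ n v) ≠ ⊥ := by
      rw [← Ideal.zero_eq_bot, Finset.prod_ne_zero_iff]
      intro v _
      exact pow_ne_zero _ (by rw [Ne, Ideal.zero_eq_bot]; exact v.ne_bot)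
    obtain ⟨w, hwJ, hw0⟩ := Submodule.exists_mem_ne_zero_of_ne_bot hJ
    refine ⟨⟨w, mem_nonZeroDivisors_of_ne_zero hw0⟩, trivial, ?_⟩
    intro c hc
    have hc1 : ∀ v : HeightOneSpectrum R, c v ∈ v.adicCompletionIntegers F := fun v =>
      (mem_adicCompletionIntegers R F v).mpr ((hc v).trans (v.intValuation_le_one w))
    have hx : (fun v : HeightOneSpectrum R => (⟨c v, hc1 v⟩ : v.adicCompletionIntegers F)) ∈ I.pi t := by
      intro v hv
      apply hn v
      refine (hc v).trans ?_
      rw [intValuation_le_pow_iff_mem]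
      exact Ideal.le_of_dvd (Finset.dvd_prod_of_mem _ (hI.mem_toFinset.mpr hv)) hwJ
    exact hsub hx
  · rintro ⟨r, -, hr⟩
    have hr0 : (r : R) ≠ 0 := nonZeroDivisors.coe_ne_zero r
    refine ⟨_, QOaux.finite_support hr0, fun v => {y : v.adicCompletionIntegers F |
      Valued.v (y : v.adicCompletion F) ≤ v.intValuation (r : R)}, fun v => ?_, ?_⟩
    · have hγ : v.intValuation (r : R) ≠ 0 := v.intValuation_ne_zero _ hr0
      have hy0 : algebraMap F (v.adicCompletion F) (algebraMap R F (r : R)) ≠ 0 :=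
        (map_ne_zero _).mpr ((map_ne_zero_iff _ (IsFractionRing.injective R F)).mpr hr0)
      have h0 : {z : v.adicCompletion F | Valued.v z ≤ v.intValuation (r : R)}
          ∈ nhds (0 : v.adicCompletion F) := by
        refine Filter.mem_of_superset (QOaux.ball_mem_nhds 0 _ hy0) fun z hz => ?_
        have hz' : Valued.v (z - 0)
            < Valued.v (algebraMap F (v.adicCompletion F) (algebraMap R F (r : R))) := hz
        rw [sub_zero, QOaux.valued_algebraMap, valuation_of_algebraMap] at hz'
        exact hz'.le
      exact (continuous_subtype_val.continuousAt
        (x := (0 : v.adicCompletionIntegers F))).preimage_mem_nhds h0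
    · intro x hx
      apply hr
      show ∀ v : HeightOneSpectrum R, Valued.v ((x v : v.adicCompletion F)) ≤ v.intValuation (r : R)
      intro v
      by_cases hv : v.intValuationDef (r : R) ≠ 1
      · exact hx v hv
      · push_neg at hv
        rw [intValuation_apply, hv]
        exact (mem_adicCompletionIntegers R F v).mp (x v).2

theorem QOaux.hasBasis_nhds (b : FiniteAdeleRing R F) :
    (nhds b).HasBasis (fun _ : nonZeroDivisors R => True)
      (fun r => {c : FiniteAdeleRing R F |
        ∀ v, Valued.v ((c - b) v) ≤ v.intValuation (r : R)}) := by
  rw [← nhds_translation_sub b]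
  exact QOaux.hasBasis_nhds_zero.comap _
end Aux2
section Aux3
variable {R : Type*} [CommRing R] [IsDedekindDomain R] {F : Type*} [Field F] [Algebra R F]
  [IsFractionRing R F]

open Classical in
/-- The characteristic adele of a set of primes. -/
noncomputable def QOaux.chi (T : Set (HeightOneSpectrum R)) : FiniteAdeleRing R F :=
  ⟨fun v => if v ∈ T then 0 else 1, by
    apply Set.Finite.subset (Set.finite_empty)
    intro v hv
    simp only [Set.mem_setOf_eq, Set.mem_compl_iff] at hv
    exfalso
    apply hv
    split_ifs
    · exact zero_mem _
    · exact one_mem _⟩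

open Classical in
theorem QOaux.chi_apply (T : Set (HeightOneSpectrum R)) (v : HeightOneSpectrum R) :
    (QOaux.chi (F := F) T) v = if v ∈ T then 0 else 1 := rfl

open Classical in
theorem QOaux.chi_zero_iff (T : Set (HeightOneSpectrum R)) (v : HeightOneSpectrum R) :
    (QOaux.chi (F := F) T) v = 0 ↔ v ∈ T := by
  rw [QOaux.chi_apply]
  split_ifs with h <;> simp [h]
end Aux3
section Aux4
variable {R : Type*} [CommRing R] [IsDedekindDomain R] {F : Type*} [Field F] [Algebra R F]
  [IsFractionRing R F]

/-- The `K^*`-orbit of a finite adele. -/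
def QOaux.orbitSet (a : FiniteAdeleRing R F) : Set (FiniteAdeleRing R F) :=
  {b | ∃ x : F, x ≠ 0 ∧ b = algebraMap F (FiniteAdeleRing R F) x * a}

set_option maxHeartbeats 2000000 in
set_option synthInstance.maxHeartbeats 400000 in
theorem QOaux.mem_closure_orbit {a b : FiniteAdeleRing R F}
    (h : ∀ v : HeightOneSpectrum R, a v = 0 → b v = 0) :
    b ∈ closure (QOaux.orbitSet a) := by
  classical
  have hbasis := QOaux.hasBasis_nhds (R := R) (F := F) b
  rw [mem_closure_iff_nhds_basis' hbasis]
  rintro r -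
  -- the finite "bad" set
  have hr0 : (r : R) ≠ 0 := nonZeroDivisors.coe_ne_zero r
  have hSfin : {v : HeightOneSpectrum R | a v ∉ v.adicCompletionIntegers F ∨
      b v ∉ v.adicCompletionIntegers F ∨ v.intValuationDef (r : R) ≠ 1}.Finite := by
    have ha2 : {v : HeightOneSpectrum R | a v ∉ v.adicCompletionIntegers F}.Finite :=
      Filter.eventually_cofinite.mp a.2
    have hb2 : {v : HeightOneSpectrum R | b v ∉ v.adicCompletionIntegers F}.Finite :=
      Filter.eventually_cofinite.mp b.2
    refine Set.Finite.subset (((ha2.union hb2).union (QOaux.finite_support hr0))) ?_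
    intro v hv
    rcases hv with h1 | h2 | h3
    · exact Or.inl (Or.inl h1)
    · exact Or.inl (Or.inr h2)
    · exact Or.inr h3
  set S : Finset (HeightOneSpectrum R) := hSfin.toFinset with hS
  set S' : Finset (HeightOneSpectrum R) := S.filter (fun v => a v ≠ 0) with hS'
  -- the target elements and approximations
  have hgamma : ∀ v ∈ S', (v.intValuation (r : R) * (Valued.v (a v))⁻¹ : WithZero (Multiplicative ℤ)) ≠ 0 := by
    intro v hv
    have hav : a v ≠ 0 := (Finset.mem_filter.mp hv).2
    apply mul_ne_zero
    · rw [intValuation_apply]; exact v.intValuation_ne_zero _ hr0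
    · rw [Ne, inv_eq_zero]
      exact (Valuation.ne_zero_iff _).mpr hav
  have hT : ∀ v : {v // v ∈ S'}, ∃ t : F,
      Valued.v (algebraMap F (v.1.adicCompletion F) t - b v.1 / a v.1)
        < v.1.intValuation (r : R) * (Valued.v (a v.1))⁻¹ := by
    rintro ⟨v, hv⟩
    have hγ := hgamma v hv
    set γu : (WithZero (Multiplicative ℤ))ˣ := Units.mk0 _ hγ with hγu
    have hball : {z : v.adicCompletion F | Valued.v (z - b v / a v) < γu} ∈ nhds (b v / a v) := by
      have hy0 : algebraMap F (v.adicCompletion F) (algebraMap R F (r : R)) / a v ≠ 0 :=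
        div_ne_zero ((map_ne_zero _).mpr ((map_ne_zero_iff _ (IsFractionRing.injective R F)).mpr
          hr0)) (Finset.mem_filter.mp hv).2
      have hvy0 : Valued.v (algebraMap F (v.adicCompletion F) (algebraMap R F (r : R)) / a v)
          = (γu : WithZero (Multiplicative ℤ)) := by
        rw [hγu, Units.val_mk0, map_div₀, QOaux.valued_algebraMap, valuation_of_algebraMap,
          div_eq_mul_inv]
      rw [← hvy0]; exact QOaux.ball_mem_nhds _ _ hy0
    have := mem_closure_iff_nhds.mp ((QOaux.denseRange_algebraMap (F := F) v) (b v / a v)) _ hball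
    obtain ⟨z, hz1, t, rfl⟩ := this
    exact ⟨t, hz1⟩
  choose t ht using hT
  -- common denominator
  obtain ⟨d, hd⟩ := IsLocalization.exist_integer_multiples (nonZeroDivisors R)
    (Finset.univ : Finset {v // v ∈ S'}) t
  have hd0 : (d : R) ≠ 0 := nonZeroDivisors.coe_ne_zero d
  have hz : ∀ v : {v // v ∈ S'}, ∃ zz : R, algebraMap R F zz = (d : R) • t v := by
    intro v
    exact hd v (Finset.mem_univ v)
  choose zfun hzfun using hz
  -- exponents
  have hn : ∀ v : {v // v ∈ S'}, ∃ n : ℕ,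
      ((Multiplicative.ofAdd (-(n:ℤ)) : Multiplicative ℤ) : WithZero (Multiplicative ℤ))
        < (v.1.intValuation (r : R) * (Valued.v (a v.1))⁻¹) * v.1.intValuation (d : R) := by
    intro v
    apply QOaux.exists_nat_lt'
    apply mul_ne_zero (hgamma v.1 v.2)
    rw [intValuation_apply]; exact v.1.intValuation_ne_zero _ hd0
  choose n hnlt using hn
  have hm : ∀ v : HeightOneSpectrum R, ∃ m : ℕ,
      ((Multiplicative.ofAdd (-(m:ℤ)) : Multiplicative ℤ) : WithZero (Multiplicative ℤ))
        < v.intValuation (d : R) := by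
    intro v
    apply QOaux.exists_nat_lt'
    rw [intValuation_apply]; exact v.intValuation_ne_zero _ hd0
  choose m hmlt using hm
  -- CRT data
  set Dfin : Finset (HeightOneSpectrum R) :=
    ((QOaux.finite_support hd0).toFinset) \ S with hDfin
  set s : Finset (HeightOneSpectrum R) := S' ∪ Dfin with hs
  set e : HeightOneSpectrum R → ℕ := fun v => if hv : v ∈ S' then n ⟨v, hv⟩ else m v with he
  set xf : HeightOneSpectrum R → R := fun v => if hv : v ∈ S' then zfun ⟨v, hv⟩ else 0 with hxf
  obtain ⟨y, hy⟩ := IsDedekindDomain.exists_forall_sub_mem_ideal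
    (s := s) (fun v : HeightOneSpectrum R => v.asIdeal) e
    (fun v _ => Ideal.prime_of_isPrime v.ne_bot v.isPrime)
    (fun i _ j _ hij => fun hc => hij (HeightOneSpectrum.ext hc))
    (fun i => xf i.1)
  -- fix nonzero
  have hJ : (∏ v ∈ s, v.asIdeal ^ e v) ≠ ⊥ := by
    rw [← Ideal.zero_eq_bot]
    rw [Finset.prod_ne_zero_iff]
    intro v _
    exact pow_ne_zero _ (by rw [Ne, Ideal.zero_eq_bot]; exact v.ne_bot)
  obtain ⟨w0, hw0J, hw00⟩ := Submodule.exists_mem_ne_zero_of_ne_bot hJ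
  have hw0mem : ∀ v ∈ s, w0 ∈ v.asIdeal ^ e v := by
    intro v hv
    exact Ideal.le_of_dvd (Finset.dvd_prod_of_mem _ hv) hw0J
  set z0 : R := if y = 0 then w0 else y with hz0def
  have hz00 : z0 ≠ 0 := by
    rw [hz0def]; split_ifs with hy0
    · exact hw00
    · exact hy0
  have hz0mem : ∀ v (hv : v ∈ s), z0 - xf v ∈ v.asIdeal ^ e v := by
    intro v hv
    rw [hz0def]; split_ifs with hy0
    · have h1 := hy v hv
      rw [hy0, zero_sub] at h1
      have h2 : xf v ∈ v.asIdeal ^ e v := by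
        have := neg_mem h1; simpa using this
      exact sub_mem (hw0mem v hv) h2
    · exact hy v hv
  -- the multiplier x
  set x : F := algebraMap R F z0 / algebraMap R F (d : R) with hxdef
  have hinj : Function.Injective (algebraMap R F) := IsFractionRing.injective R F
  have hx0 : x ≠ 0 := by
    apply div_ne_zero
    · rw [Ne, map_eq_zero_iff _ hinj]; exact hz00
    · rw [Ne, map_eq_zero_iff _ hinj]; exact hd0
  refine ⟨algebraMap F (FiniteAdeleRing R F) x * a, ?_, ⟨x, hx0, rfl⟩⟩
  show ∀ v : HeightOneSpectrum R,
    Valued.v ((algebraMap F (FiniteAdeleRing R F) x * a - b) v) ≤ v.intValuation (r : R)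
  intro v
  have hcomp : (algebraMap F (FiniteAdeleRing R F) x * a - b) v
      = algebraMap F (v.adicCompletion F) x * a v - b v := rfl
  rw [hcomp]
  -- valuation computations for x
  have hvx : ∀ w : HeightOneSpectrum R, Valued.v (algebraMap F (w.adicCompletion F) x)
      = w.intValuation z0 * (w.intValuation (d : R))⁻¹ := by
    intro w
    rw [QOaux.valued_algebraMap, hxdef, map_div₀, valuation_of_algebraMap, valuation_of_algebraMap,
      div_eq_mul_inv]
  by_cases hav : a v = 0
  · rw [hav, h v hav, mul_zero, sub_zero, Valuation.map_zero]
    exact zero_le'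
  · by_cases hvS : v ∈ S
    · -- v ∈ S', the approximation case
      have hvS' : v ∈ S' := Finset.mem_filter.mpr ⟨hvS, hav⟩
      set i : {w // w ∈ S'} := ⟨v, hvS'⟩ with hi
      -- x - t i has small valuation
      have hxt : Valued.v (algebraMap F (v.adicCompletion F) x
          - algebraMap F (v.adicCompletion F) (t i))
          < (v.intValuation (r : R) * (Valued.v (a v))⁻¹) := by
        rw [← RingHom.map_sub, QOaux.valued_algebraMap]
        have hden : algebraMap R F (d : R) ≠ 0 := by
          rw [Ne, map_eq_zero_iff _ hinj]; exact hd0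
        have hteq : t i = algebraMap R F (zfun i) / algebraMap R F (d : R) := by
          rw [eq_div_iff hden, hzfun i, Algebra.smul_def, mul_comm]
        have hsub : x - t i = algebraMap R F (z0 - zfun i) / algebraMap R F (d : R) := by
          rw [hxdef, hteq, map_sub, sub_div]
        rw [hsub, map_div₀, valuation_of_algebraMap, valuation_of_algebraMap, div_eq_mul_inv]
        have hz0i : z0 - zfun i ∈ v.asIdeal ^ e v := by
          have := hz0mem v (Finset.mem_union_left _ hvS')
          rw [hxf] at this
          simpa [hvS'] using this
        have hev : e v = n i := by rw [he]; simp [hvS']; rfl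
        have hle : v.intValuation (z0 - zfun i) ≤
            ((Multiplicative.ofAdd (-(n i : ℤ)) : Multiplicative ℤ) : WithZero (Multiplicative ℤ)) := by
          change v.intValuation (z0 - zfun i) ≤ WithZero.exp (-(n i : ℤ))
          rw [intValuation_le_pow_iff_dvd]
          rw [Ideal.dvd_span_singleton]
          rw [← hev]; exact hz0i
        have hlt2 : v.intValuation (z0 - zfun i)
            < (v.intValuation (r : R) * (Valued.v (a v))⁻¹) * v.intValuation (d : R) :=
          lt_of_le_of_lt hle (hnlt i)
        -- divide by intValuation d
        have hdne : (v.intValuation (d : R)) ≠ 0 := by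
          rw [intValuation_apply]; exact v.intValuation_ne_zero _ hd0
        calc v.intValuation (z0 - zfun i) * (v.intValuation (d : R))⁻¹
            < ((v.intValuation (r : R) * (Valued.v (a v))⁻¹) * v.intValuation (d : R))
              * (v.intValuation (d : R))⁻¹ :=
              QOaux.mul_lt_mul_right'' hlt2 (by rw [Ne, inv_eq_zero]; exact hdne)
          _ = v.intValuation (r : R) * (Valued.v (a v))⁻¹ := by
              rw [mul_assoc, mul_inv_cancel₀ hdne, mul_one]
      -- combine with approximation of b v / a v
      have hfinal : Valued.v (algebraMap F (v.adicCompletion F) x - b v / a v)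
          < v.intValuation (r : R) * (Valued.v (a v))⁻¹ := by
        have h3 := ht i
        have hmax := Valuation.map_add Valued.v
          (algebraMap F (v.adicCompletion F) x - algebraMap F (v.adicCompletion F) (t i))
          (algebraMap F (v.adicCompletion F) (t i) - b v / a v)
        rw [sub_add_sub_cancel] at hmax
        exact lt_of_le_of_lt hmax (max_lt hxt h3)
      have hrw : algebraMap F (v.adicCompletion F) x * a v - b v
          = (algebraMap F (v.adicCompletion F) x - b v / a v) * a v := by
        rw [sub_mul, div_mul_cancel₀ _ hav]
      rw [hrw, Valuation.map_mul]
      have havne : (Valued.v (a v) : WithZero (Multiplicative ℤ)) ≠ 0 :=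
        (Valuation.ne_zero_iff _).mpr hav
      calc Valued.v (algebraMap F (v.adicCompletion F) x - b v / a v) * Valued.v (a v)
          ≤ (v.intValuation (r : R) * (Valued.v (a v))⁻¹) * Valued.v (a v) :=
            mul_le_mul_left hfinal.le _
        _ = v.intValuation (r : R) := by rw [mul_assoc, inv_mul_cancel₀ havne, mul_one]
    · -- v ∉ S: everything integral
      have hnot : ¬(a v ∉ v.adicCompletionIntegers F ∨
          b v ∉ v.adicCompletionIntegers F ∨ v.intValuationDef (r : R) ≠ 1) := by
        intro hcon
        exact hvS (hSfin.mem_toFinset.mpr hcon)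
      push_neg at hnot
      obtain ⟨haint, hbint, hrval⟩ := hnot
      have hx1 : Valued.v (algebraMap F (v.adicCompletion F) x) ≤ 1 := by
        rw [hvx v]
        by_cases hd1 : v.intValuationDef (d : R) = 1
        · have hone' : v.intValuation (d : R) = 1 := by rw [intValuation_apply]; exact hd1
          rw [hone', inv_one, mul_one, intValuation_apply]
          exact v.intValuation_le_one z0
        · have hvD : v ∈ Dfin := by
            rw [hDfin, Finset.mem_sdiff]
            refine ⟨(QOaux.finite_support hd0).mem_toFinset.mpr hd1, hvS⟩
          have hvs : v ∈ s := Finset.mem_union_right _ hvD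
          have hvnS' : v ∉ S' := by
            intro hc
            exact hvS (Finset.mem_filter.mp hc).1
          have hz0v : z0 ∈ v.asIdeal ^ e v := by
            have := hz0mem v hvs
            rw [hxf] at this
            simpa [hvnS'] using this
          have hev : e v = m v := by rw [he]; simp [hvnS']
          have hle : v.intValuation z0 ≤
              ((Multiplicative.ofAdd (-(m v : ℤ)) : Multiplicative ℤ) : WithZero (Multiplicative ℤ)) := by
            change v.intValuation z0 ≤ WithZero.exp (-(m v : ℤ))
            rw [intValuation_le_pow_iff_dvd, Ideal.dvd_span_singleton, ← hev]
            exact hz0v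
          have hlt := lt_of_le_of_lt hle (hmlt v)
          have hdne : (v.intValuation (d : R)) ≠ 0 := by
            rw [intValuation_apply]; exact v.intValuation_ne_zero _ hd0
          have := QOaux.mul_lt_mul_right'' hlt (by rw [Ne, inv_eq_zero]; exact hdne)
          rw [mul_inv_cancel₀ hdne] at this
          exact this.le
      have hone : v.intValuation (r : R) = 1 := by rw [intValuation_apply]; exact hrval
      rw [hone]
      have h1 : Valued.v (algebraMap F (v.adicCompletion F) x * a v) ≤ 1 := by
        rw [Valuation.map_mul]
        calc Valued.v (algebraMap F (v.adicCompletion F) x) * Valued.v (a v)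
            ≤ 1 * 1 := mul_le_mul' hx1 ((mem_adicCompletionIntegers R F v).mp haint)
          _ = 1 := one_mul 1
      have h2 : Valued.v (b v) ≤ 1 := (mem_adicCompletionIntegers R F v).mp hbint
      calc Valued.v (algebraMap F (v.adicCompletion F) x * a v - b v)
          ≤ max (Valued.v (algebraMap F (v.adicCompletion F) x * a v)) (Valued.v (b v)) :=
            Valuation.map_sub _ _ _
        _ ≤ 1 := max_le h1 h2
end Aux4
section Aux5
variable {R : Type*} [CommRing R] [IsDedekindDomain R] {F : Type*} [Field F] [Algebra R F]
  [IsFractionRing R F]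

set_option synthInstance.maxHeartbeats 1000000 in
theorem QOaux.isClosed_zero_set (a : FiniteAdeleRing R F) :
    IsClosed {b : FiniteAdeleRing R F | ∀ v : HeightOneSpectrum R, a v = 0 → b v = 0} := by
  have : {b : FiniteAdeleRing R F | ∀ v : HeightOneSpectrum R, a v = 0 → b v = 0}
      = ⋂ v ∈ {v : HeightOneSpectrum R | a v = 0}, {b : FiniteAdeleRing R F | b v = 0} := by
    ext c
    simp only [Set.mem_setOf_eq, Set.mem_iInter]
  rw [this]
  refine isClosed_biInter fun v _ => ?_
  haveI : T2Space (v.adicCompletion F) := QOaux.t2 v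
  exact isClosed_singleton.preimage (QOaux.continuous_eval v)

theorem QOaux.closure_orbit_eq (a : FiniteAdeleRing R F) :
    closure (QOaux.orbitSet a)
      = {b : FiniteAdeleRing R F | ∀ v : HeightOneSpectrum R, a v = 0 → b v = 0} := by
  apply subset_antisymm
  · apply closure_minimal ?_ (QOaux.isClosed_zero_set a)
    rintro c ⟨x, _, rfl⟩ v hav
    show algebraMap F (v.adicCompletion F) x * a v = 0
    rw [hav, mul_zero]
  · intro b hb
    exact QOaux.mem_closure_orbit hb
end Aux5
/-- The power-cofinite topology on the power set `2^P`. -/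
def powerCofinite (P : Type*) : TopologicalSpace (Set P) :=
  TopologicalSpace.generateFrom {U : Set (Set P) | ∃ F : Finset P, U = {T : Set P | ∀ a ∈ F, a ∉ T}}

/-- The quasi-orbit equivalence relation for the action of `K^*` on the finite adele ring:
two adeles are equivalent when their orbit closures coincide. -/
noncomputable def quasiOrbitSetoid (K : Type*) [Field K] [NumberField K] :
    Setoid (FiniteAdeleRing (NumberField.RingOfIntegers K) K) :=
  Setoid.ker (fun a => closure {b : FiniteAdeleRing (NumberField.RingOfIntegers K) K |
    ∃ x : K, x ≠ 0 ∧
      b = algebraMap K (FiniteAdeleRing (NumberField.RingOfIntegers K) K) x * a})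

section Main
variable (K : Type*) [Field K] [NumberField K]

theorem QOaux.rel_iff (a b : FiniteAdeleRing (NumberField.RingOfIntegers K) K) :
    (quasiOrbitSetoid K).r a b ↔
      {v : HeightOneSpectrum (NumberField.RingOfIntegers K) | a v = 0}
        = {v : HeightOneSpectrum (NumberField.RingOfIntegers K) | b v = 0} := by
  have hker : (quasiOrbitSetoid K).r a b ↔
      closure (QOaux.orbitSet a) = closure (QOaux.orbitSet b) := Iff.rfl
  rw [hker, QOaux.closure_orbit_eq, QOaux.closure_orbit_eq]
  constructor
  · intro hcl
    have h1 : ∀ v : HeightOneSpectrum (NumberField.RingOfIntegers K), a v = 0 → b v = 0 := by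
      have hb : b ∈ {c : FiniteAdeleRing (NumberField.RingOfIntegers K) K |
          ∀ v : HeightOneSpectrum (NumberField.RingOfIntegers K), b v = 0 → c v = 0} :=
        fun v hv => hv
      rw [← hcl] at hb
      exact hb
    have h2 : ∀ v : HeightOneSpectrum (NumberField.RingOfIntegers K), b v = 0 → a v = 0 := by
      have ha : a ∈ {c : FiniteAdeleRing (NumberField.RingOfIntegers K) K |
          ∀ v : HeightOneSpectrum (NumberField.RingOfIntegers K), a v = 0 → c v = 0} :=
        fun v hv => hv
      rw [hcl] at ha
      exact ha
    ext v
    exact ⟨h1 v, h2 v⟩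
  · intro hZ
    ext c
    constructor
    · intro hc v hv
      exact hc v ((Set.ext_iff.mp hZ v).mpr hv)
    · intro hc v hv
      exact hc v ((Set.ext_iff.mp hZ v).mp hv)

set_option maxHeartbeats 1000000 in
set_option synthInstance.maxHeartbeats 400000 in
theorem statement8' :
    letI := powerCofinite (HeightOneSpectrum (NumberField.RingOfIntegers K))
    ∃ e : Quotient (quasiOrbitSetoid K) ≃ₜ
        Set (HeightOneSpectrum (NumberField.RingOfIntegers K)),
      ∀ a : FiniteAdeleRing (NumberField.RingOfIntegers K) K,
        e (Quotient.mk (quasiOrbitSetoid K) a)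
          = {v : HeightOneSpectrum (NumberField.RingOfIntegers K) | a v = 0} := by
  classical
  letI tP := powerCofinite (HeightOneSpectrum (NumberField.RingOfIntegers K))
  let Zmap : FiniteAdeleRing (NumberField.RingOfIntegers K) K →
      Set (HeightOneSpectrum (NumberField.RingOfIntegers K)) := fun a => {v | a v = 0}
  let e0 : Quotient (quasiOrbitSetoid K) ≃ Set (HeightOneSpectrum (NumberField.RingOfIntegers K)) :=
  { toFun := Quotient.lift Zmap (fun a b hab => (QOaux.rel_iff K a b).mp hab)
    invFun := fun T => Quotient.mk (quasiOrbitSetoid K) (QOaux.chi (F := K) T)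
    left_inv := by
      refine fun q => Quotient.inductionOn q (fun a => ?_)
      refine Quot.sound ((QOaux.rel_iff K _ _).mpr ?_)
      ext v
      exact QOaux.chi_zero_iff _ v
    right_inv := fun T => Set.ext fun v => QOaux.chi_zero_iff T v }
  -- continuity of the forward map
  have hZcont : @Continuous _ _ _ (TopologicalSpace.generateFrom
      {U : Set (Set (HeightOneSpectrum (NumberField.RingOfIntegers K))) |
        ∃ F : Finset (HeightOneSpectrum (NumberField.RingOfIntegers K)),
          U = {T | ∀ a ∈ F, a ∉ T}}) Zmap := by
    rw [continuous_generateFrom_iff]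
    rintro U ⟨Fs, rfl⟩
    have heq : Zmap ⁻¹' {T : Set (HeightOneSpectrum (NumberField.RingOfIntegers K)) |
        ∀ p ∈ Fs, p ∉ T} = ⋂ p ∈ Fs,
          {a : FiniteAdeleRing (NumberField.RingOfIntegers K) K | a p ≠ 0} := by
      ext a
      simp only [Set.mem_preimage, Set.mem_setOf_eq, Set.mem_iInter]
      rfl
    rw [heq]
    refine isOpen_biInter_finset fun p _ => ?_
    haveI : T2Space (p.adicCompletion K) := QOaux.t2 p
    have heq2 : {a : FiniteAdeleRing (NumberField.RingOfIntegers K) K | a p ≠ 0}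
        = (fun a : FiniteAdeleRing (NumberField.RingOfIntegers K) K => a p) ⁻¹' ({0}ᶜ) := rfl
    rw [heq2]
    exact isOpen_compl_singleton.preimage (QOaux.continuous_eval p)
  have hcont : Continuous e0.toFun := continuous_quot_lift _ hZcont
  -- continuity of the inverse map
  have hcontinv : Continuous e0.invFun := by
    rw [continuous_def]
    intro W hW
    have hUopen : IsOpen (Quotient.mk (quasiOrbitSetoid K) ⁻¹' W) :=
      hW.preimage continuous_quot_mk
    rw [isOpen_iff_forall_mem_open]
    intro T hT
    have hchiU : QOaux.chi (F := K) T ∈ Quotient.mk (quasiOrbitSetoid K) ⁻¹' W := hT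
    have hbasis := QOaux.hasBasis_nhds (R := NumberField.RingOfIntegers K) (F := K)
      (QOaux.chi (F := K) T)
    obtain ⟨r, -, hrsub⟩ := hbasis.mem_iff.mp (hUopen.mem_nhds hchiU)
    have hr0 : (r : NumberField.RingOfIntegers K) ≠ 0 := nonZeroDivisors.coe_ne_zero r
    refine ⟨{T' : Set (HeightOneSpectrum (NumberField.RingOfIntegers K)) |
        ∀ p ∈ (QOaux.finite_support hr0).toFinset.filter (fun v => v ∉ T), p ∉ T'}, ?_,
      TopologicalSpace.isOpen_generateFrom_of_mem ⟨_, rfl⟩, ?_⟩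
    · -- the basic open set is contained in the preimage
      intro T' hT'
      have hbU : QOaux.chi (F := K) (T ∪ T') ∈ Quotient.mk (quasiOrbitSetoid K) ⁻¹' W := by
        apply hrsub
        show ∀ v : HeightOneSpectrum (NumberField.RingOfIntegers K),
          Valued.v ((QOaux.chi (F := K) (T ∪ T') - QOaux.chi (F := K) T) v)
            ≤ v.intValuation (r : NumberField.RingOfIntegers K)
        intro v
        have hcomp : (QOaux.chi (F := K) (T ∪ T') - QOaux.chi (F := K) T) v
            = (QOaux.chi (F := K) (T ∪ T')) v - (QOaux.chi (F := K) T) v := rfl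
        rw [hcomp, QOaux.chi_apply, QOaux.chi_apply]
        by_cases hvT : v ∈ T
        · rw [if_pos (Set.mem_union_left _ hvT), if_pos hvT, sub_zero, Valuation.map_zero]
          exact zero_le'
        · by_cases hvT' : v ∈ T'
          · rw [if_pos (Set.mem_union_right _ hvT'), if_neg hvT, zero_sub, Valuation.map_neg,
              Valuation.map_one]
            have hvnF : v ∉ (QOaux.finite_support hr0).toFinset.filter (fun v => v ∉ T) :=
              fun hc => (hT' v hc) hvT'
            have hval1 : v.intValuationDef (r : NumberField.RingOfIntegers K) = 1 := by
              by_contra hne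
              exact hvnF (Finset.mem_filter.mpr
                ⟨(QOaux.finite_support hr0).mem_toFinset.mpr hne, hvT⟩)
            rw [intValuation_apply, hval1]
          · rw [if_neg (fun hc => hc.elim hvT hvT'), if_neg hvT, sub_self, Valuation.map_zero]
            exact zero_le'
      have hbcl : QOaux.chi (F := K) (T ∪ T')
          ∈ closure (QOaux.orbitSet (QOaux.chi (F := K) T')) := by
        rw [QOaux.closure_orbit_eq]
        intro v hv
        exact (QOaux.chi_zero_iff _ v).mpr
          (Set.mem_union_right _ ((QOaux.chi_zero_iff T' v).mp hv))
      obtain ⟨c, hcU, x, hx0, rfl⟩ :=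
        mem_closure_iff.mp hbcl _ hUopen hbU
      have hZeq : {v : HeightOneSpectrum (NumberField.RingOfIntegers K) |
            (algebraMap K (FiniteAdeleRing (NumberField.RingOfIntegers K) K) x
              * QOaux.chi (F := K) T') v = 0}
          = {v : HeightOneSpectrum (NumberField.RingOfIntegers K) |
            (QOaux.chi (F := K) T') v = 0} := by
        ext v
        have hcomp : (algebraMap K (FiniteAdeleRing (NumberField.RingOfIntegers K) K) x
              * QOaux.chi (F := K) T') v
            = algebraMap K (v.adicCompletion K) x * (QOaux.chi (F := K) T') v := rfl
        simp only [Set.mem_setOf_eq, hcomp]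
        constructor
        · intro h0
          rcases mul_eq_zero.mp h0 with h1 | h2
          · exact absurd ((map_eq_zero _).mp h1) hx0
          · exact h2
        · intro h0
          rw [h0, mul_zero]
      have hmk : Quotient.mk (quasiOrbitSetoid K)
            (algebraMap K (FiniteAdeleRing (NumberField.RingOfIntegers K) K) x
              * QOaux.chi (F := K) T')
          = Quotient.mk (quasiOrbitSetoid K) (QOaux.chi (F := K) T') :=
        Quot.sound ((QOaux.rel_iff K _ _).mpr hZeq)
      show Quotient.mk (quasiOrbitSetoid K) (QOaux.chi (F := K) T') ∈ W
      rw [← hmk]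
      exact hcU
    · intro p hp
      exact (Finset.mem_filter.mp hp).2
  exact ⟨⟨e0, hcont, hcontinv⟩, fun a => rfl⟩
end Main

/-- The map `a ↦ Z(a) = {v : a_v = 0}` descends to a homeomorphism from the quasi-orbit
space `Q(A_{K,f}/K^*)` (with the quotient topology) onto the power set `2^{P_K}` with the
power-cofinite topology. -/
theorem statement8 (K : Type*) [Field K] [NumberField K] :
    letI := powerCofinite (HeightOneSpectrum (NumberField.RingOfIntegers K))
    ∃ e : Quotient (quasiOrbitSetoid K) ≃ₜ
        Set (HeightOneSpectrum (NumberField.RingOfIntegers K)),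
      ∀ a : FiniteAdeleRing (NumberField.RingOfIntegers K) K,
        e (Quotient.mk (quasiOrbitSetoid K) a)
          = {v : HeightOneSpectrum (NumberField.RingOfIntegers K) | a v = 0} := by
  exact statement8' K
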